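/- For u_n = a_n + b_n x with a_n = √(2 log n) - (log log n + log π)/(2√(2 log n)), b_n = 1/√(2 log n), and fixed x ∈ ℝ, one has [2Φ(u_n) - 1]^n → exp(-e^{-x}) as n → ∞. -/

import Mathlib

open Real Filter Topology MeasureTheory

noncomputable def stdNormalPDF (u : ℝ) : ℝ :=
  (Real.sqrt (2 * Real.pi))⁻¹ * Real.exp (-(u ^ 2) / 2)

noncomputable def stdNormalCDF (u : ℝ) : ℝ :=
  ∫ t in Set.Iic u, stdNormalPDF t

noncomputable def aseq (n : ℕ) : ℝ :=
  Real.sqrt (2 * Real.log n) -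
    (Real.log (Real.log n) + Real.log Real.pi) / (2 * Real.sqrt (2 * Real.log n))

noncomputable def bseq (n : ℕ) : ℝ := 1 / Real.sqrt (2 * Real.log n)

section Aux
open Set

lemma pdf_pos (u : ℝ) : 0 < stdNormalPDF u := by
  unfold stdNormalPDF; positivity

lemma pdf_eq (u : ℝ) : stdNormalPDF u = (Real.sqrt (2 * Real.pi))⁻¹ * Real.exp (-(2⁻¹) * u ^ 2) := by
  unfold stdNormalPDF; ring_nf

lemma pdf_integrable : Integrable stdNormalPDF := by
  simp only [funext pdf_eq]
  exact (integrable_exp_neg_mul_sq (by norm_num)).const_mul _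

lemma pdf_integral : ∫ u, stdNormalPDF u = 1 := by
  simp only [funext pdf_eq]
  rw [integral_const_mul, integral_gaussian]
  rw [show Real.pi / 2⁻¹ = 2 * Real.pi by ring]
  rw [inv_mul_cancel₀ (by positivity)]

lemma pdf_continuous : Continuous stdNormalPDF := by
  unfold stdNormalPDF; fun_prop

lemma pdf_hasDeriv (t : ℝ) : HasDerivAt (fun s => -stdNormalPDF s) (t * stdNormalPDF t) t := by
  have h : HasDerivAt (fun s : ℝ => -(s ^ 2) / 2) (-t) t := by
    have := ((hasDerivAt_pow 2 t).neg).div_const 2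
    exact this.congr_deriv (by push_cast; ring)
  have h2 := (h.exp.const_mul ((Real.sqrt (2 * Real.pi))⁻¹)).neg
  refine h2.congr_deriv ?_
  unfold stdNormalPDF; ring

lemma pdf_tendsto_zero : Tendsto stdNormalPDF atTop (𝓝 0) := by
  unfold stdNormalPDF
  rw [show (0:ℝ) = (Real.sqrt (2 * Real.pi))⁻¹ * 0 by ring]
  apply Tendsto.const_mul
  apply Real.tendsto_exp_atBot.comp
  have : Tendsto (fun s:ℝ => s ^ 2) atTop atTop := tendsto_pow_atTop (by norm_num)
  exact (tendsto_neg_atBot_iff.mpr this).atBot_div_const (by norm_num)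

-- tail
noncomputable def T (u : ℝ) : ℝ := ∫ t in Set.Ioi u, stdNormalPDF t

lemma cdf_add_T (u : ℝ) : stdNormalCDF u + T u = 1 := by
  rw [stdNormalCDF, T, ← pdf_integral]
  exact intervalIntegral.integral_Iic_add_Ioi pdf_integrable.integrableOn pdf_integrable.integrableOn

lemma int_t_pdf {u : ℝ} (hu : 0 < u) :
    IntegrableOn (fun t => t * stdNormalPDF t) (Ioi u) ∧
    ∫ t in Ioi u, t * stdNormalPDF t = stdNormalPDF u := by
  have hderiv : ∀ t ∈ Ici u, HasDerivAt (fun s => -stdNormalPDF s) (t * stdNormalPDF t) t :=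
    fun t _ => pdf_hasDeriv t
  have hpos : ∀ t ∈ Ioi u, 0 ≤ t * stdNormalPDF t := fun t ht =>
    mul_nonneg (le_of_lt (hu.trans ht)) (pdf_pos t).le
  have hlim : Tendsto (fun s => -stdNormalPDF s) atTop (𝓝 0) := by
    simpa using pdf_tendsto_zero.neg
  refine ⟨integrableOn_Ioi_deriv_of_nonneg' hderiv hpos hlim, ?_⟩
  rw [integral_Ioi_of_hasDerivAt_of_nonneg' hderiv hpos hlim]
  simp

lemma int_pdf_corr {u : ℝ} (hu : 0 < u) :
    IntegrableOn (fun t => stdNormalPDF t * (1 + (t⁻¹) ^ 2)) (Ioi u) ∧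
    ∫ t in Ioi u, stdNormalPDF t * (1 + (t⁻¹) ^ 2) = stdNormalPDF u / u := by
  have hderiv : ∀ t ∈ Ici u, HasDerivAt (fun s => -stdNormalPDF s / s)
      (stdNormalPDF t * (1 + (t⁻¹) ^ 2)) t := by
    intro t ht
    have htne : t ≠ 0 := (hu.trans_le ht).ne'
    have h1 := (pdf_hasDeriv t).div (hasDerivAt_id t) htne
    refine h1.congr_deriv ?_
    simp only [id]
    field_simp
    ring
  have hpos : ∀ t ∈ Ioi u, 0 ≤ stdNormalPDF t * (1 + (t⁻¹) ^ 2) := fun t _ =>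
    mul_nonneg (pdf_pos t).le (by positivity)
  have hlim : Tendsto (fun s => -stdNormalPDF s / s) atTop (𝓝 0) := by
    have := (pdf_tendsto_zero.neg).mul tendsto_inv_atTop_zero
    simpa [div_eq_mul_inv] using this
  refine ⟨integrableOn_Ioi_deriv_of_nonneg' hderiv hpos hlim, ?_⟩
  rw [integral_Ioi_of_hasDerivAt_of_nonneg' hderiv hpos hlim]
  ring

lemma T_le {u : ℝ} (hu : 0 < u) : T u ≤ stdNormalPDF u / u := by
  obtain ⟨hint, heq⟩ := int_t_pdf hu
  have : T u ≤ ∫ t in Ioi u, (t / u) * stdNormalPDF t := by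
    apply setIntegral_mono_on pdf_integrable.integrableOn
    · simpa [div_mul_eq_mul_div, IntegrableOn] using hint.div_const u
    · exact measurableSet_Ioi
    · intro t ht
      have h1 : (1:ℝ) ≤ t / u := (one_le_div hu).mpr (le_of_lt ht)
      nlinarith [pdf_pos t]
  calc T u ≤ ∫ t in Ioi u, (t / u) * stdNormalPDF t := this
    _ = (∫ t in Ioi u, t * stdNormalPDF t) / u := by
        rw [← integral_div]; congr 1; ext t; ring
    _ = stdNormalPDF u / u := by rw [heq]

lemma le_T {u : ℝ} (hu : 0 < u) : stdNormalPDF u / u ≤ (1 + (u⁻¹) ^ 2) * T u := by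
  obtain ⟨hint, heq⟩ := int_pdf_corr hu
  rw [← heq]
  have : ∫ t in Ioi u, stdNormalPDF t * (1 + (t⁻¹) ^ 2) ≤
      ∫ t in Ioi u, (1 + (u⁻¹) ^ 2) * stdNormalPDF t := by
    apply setIntegral_mono_on hint
    · exact pdf_integrable.integrableOn.const_mul _
    · exact measurableSet_Ioi
    · intro t ht
      have h1 : (t⁻¹) ^ 2 ≤ (u⁻¹) ^ 2 := by
        apply pow_le_pow_left₀ (inv_nonneg.mpr (hu.trans ht).le)
        exact inv_anti₀ hu (le_of_lt ht)
      nlinarith [pdf_pos t]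
  calc ∫ t in Ioi u, stdNormalPDF t * (1 + (t⁻¹) ^ 2)
      ≤ ∫ t in Ioi u, (1 + (u⁻¹) ^ 2) * stdNormalPDF t := this
    _ = (1 + (u⁻¹) ^ 2) * T u := by rw [integral_const_mul]; rfl

noncomputable def sq' (n : ℕ) : ℝ := Real.sqrt (2 * Real.log n)
noncomputable def cq (x : ℝ) (n : ℕ) : ℝ := 2*x - Real.log (Real.log n) - Real.log Real.pi
noncomputable def uq (x : ℝ) (n : ℕ) : ℝ := aseq n + bseq n * x

lemma key_eq  (x : ℝ) {n : ℕ} (hn : 1 ≤ n) (hL : 0 < Real.log n) :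
    2 * n * stdNormalPDF (uq x n) / uq x n =
      Real.exp (-x) * (sq' n / uq x n) *
        Real.exp (-(cq x n)^2 / (16 * Real.log n)) := by
  have hn0 : (0:ℝ) < n := by exact_mod_cast hn
  set L := Real.log n with hLdef
  have hs : 0 < sq' n := Real.sqrt_pos.mpr (by positivity)
  have hs2 : sq' n ^ 2 = 2 * L := Real.sq_sqrt (by positivity)
  have hu : uq x n = sq' n + cq x n / (2 * sq' n) := by
    unfold uq aseq bseq cq sq'
    rw [← hLdef]
    field_simp
    ring
  have husq : uq x n ^ 2 = 2*L + cq x n + (cq x n)^2/(8*L) := by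
    rw [hu]
    field_simp
    linear_combination (32 * L * sq' n ^ 2 - 4 * cq x n ^ 2) * hs2
  have hexpL : Real.exp (-L) = (n:ℝ)⁻¹ := by
    rw [Real.exp_neg, hLdef, Real.exp_log hn0]
  have hsqrtL : Real.exp (Real.log L / 2) = Real.sqrt L := by
    rw [Real.exp_half, Real.exp_log hL]
  have hsqrtpi : Real.exp (Real.log Real.pi / 2) = Real.sqrt Real.pi := by
    rw [Real.exp_half, Real.exp_log Real.pi_pos]
  have hexps : Real.exp (-(uq x n ^ 2)/2) =
      (n:ℝ)⁻¹ * (Real.exp (-x) * (Real.sqrt L * Real.sqrt Real.pi)) *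
        Real.exp (-(cq x n)^2/(16*L)) := by
    rw [husq, show -(2*L + cq x n + (cq x n)^2/(8*L))/2
        = (-L + (-(cq x n)/2)) + (-(cq x n)^2/(16*L)) by field_simp; ring]
    rw [show -(cq x n)/2 = -x + (Real.log L / 2 + Real.log Real.pi / 2) by
      unfold cq; rw [← hLdef]; ring]
    rw [Real.exp_add, Real.exp_add, Real.exp_add, Real.exp_add, hexpL, hsqrtL, hsqrtpi]
  have h2pi : (0:ℝ) < Real.sqrt (2*Real.pi) := Real.sqrt_pos.mpr (by positivity)
  have hconst : Real.sqrt (2*Real.pi) * sq' n = 2 * (Real.sqrt Real.pi * Real.sqrt L) := by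
    unfold sq'; rw [← hLdef]
    rw [Real.sqrt_mul (by norm_num) Real.pi, Real.sqrt_mul (by norm_num) L]
    have h22 := Real.mul_self_sqrt (show (0:ℝ) ≤ 2 by norm_num)
    linear_combination (Real.sqrt Real.pi * Real.sqrt L) * h22
  have hnum : 2 * (n:ℝ) * stdNormalPDF (uq x n) =
      Real.exp (-x) * sq' n * Real.exp (-(cq x n)^2/(16*L)) := by
    unfold stdNormalPDF
    rw [hexps]
    field_simp
    have hmul : Real.sqrt 2 * Real.sqrt Real.pi = Real.sqrt (2*Real.pi) :=
      (Real.sqrt_mul (by norm_num) Real.pi).symm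
    linear_combination -hconst
  rw [hnum]
  ring

lemma tendsto_sqrt_atTop : Tendsto Real.sqrt atTop atTop := by
  refine tendsto_atTop.2 fun b => ?_
  filter_upwards [eventually_ge_atTop (max (b ^ 2) 0)] with a ha
  rcases le_or_gt b 0 with hb | hb
  · exact hb.trans (Real.sqrt_nonneg a)
  · have h1 : b ^ 2 ≤ a := le_trans (le_max_left _ _) ha
    nlinarith [Real.sq_sqrt (le_trans (le_max_right _ _) ha), Real.sqrt_nonneg a]

lemma hL_top : Tendsto (fun n : ℕ => Real.log n) atTop atTop :=
  Real.tendsto_log_atTop.comp tendsto_natCast_atTop_atTop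

lemma hs_top : Tendsto sq' atTop atTop := by
  unfold sq'
  exact _root_.tendsto_sqrt_atTop.comp (hL_top.const_mul_atTop (by norm_num))

lemma hc_div_L (x : ℝ) : Tendsto (fun n : ℕ => cq x n / Real.log n) atTop (𝓝 0) := by
  have hg : Tendsto (fun t : ℝ => (2 * x - Real.log t - Real.log Real.pi) / t) atTop (𝓝 0) := by
    have h1 : Tendsto (fun t : ℝ => (2 * x - Real.log Real.pi) * t⁻¹) atTop (𝓝 0) := by
      simpa using tendsto_inv_atTop_zero.const_mul (2 * x - Real.log Real.pi)
    have h2 : Tendsto (fun t : ℝ => Real.log t / t) atTop (𝓝 0) :=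
      Real.isLittleO_log_id_atTop.tendsto_div_nhds_zero
    have := h1.sub h2
    simp only [sub_zero] at this
    refine this.congr (fun t => ?_)
    ring
  exact hg.comp hL_top

lemma hc_div_sqrtL (x : ℝ) : Tendsto (fun n : ℕ => cq x n / Real.sqrt (Real.log n)) atTop (𝓝 0) := by
  have hg : Tendsto (fun t : ℝ => (2 * x - Real.log t - Real.log Real.pi) / Real.sqrt t) atTop (𝓝 0) := by
    have h1 : Tendsto (fun t : ℝ => (2 * x - Real.log Real.pi) * (Real.sqrt t)⁻¹) atTop (𝓝 0) := by
      simpa using (tendsto_inv_atTop_zero.comp _root_.tendsto_sqrt_atTop).const_mul (2 * x - Real.log Real.pi)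
    have h2 : Tendsto (fun t : ℝ => Real.log t / Real.sqrt t) atTop (𝓝 0) := by
      have h3 := (isLittleO_log_rpow_atTop (by norm_num : (0:ℝ) < 1/2)).tendsto_div_nhds_zero
      refine h3.congr' ?_
      filter_upwards [eventually_ge_atTop (0:ℝ)] with t ht
      rw [Real.sqrt_eq_rpow]
    have := h1.sub h2
    simp only [sub_zero] at this
    refine this.congr (fun t => ?_)
    ring
  exact hg.comp hL_top

lemma hu' {x : ℝ} {n : ℕ} (hL : 0 < Real.log n) :
    uq x n = sq' n + cq x n / (2 * sq' n) := by
  have hs : 0 < sq' n := Real.sqrt_pos.mpr (by positivity)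
  unfold uq aseq bseq cq sq'
  field_simp
  ring

lemma hu_eq {x : ℝ} {n : ℕ} (hL : 0 < Real.log n) :
    uq x n = sq' n * (1 + cq x n / (4 * Real.log n)) := by
  have hs : 0 < sq' n := Real.sqrt_pos.mpr (by positivity)
  have hs2 : sq' n ^ 2 = 2 * Real.log n := Real.sq_sqrt (by positivity)
  rw [hu' hL]
  field_simp
  linear_combination (-2 * cq x n) * hs2

lemma h_one_plus (x : ℝ) : Tendsto (fun n : ℕ => 1 + cq x n / (4 * Real.log n)) atTop (𝓝 1) := by
  have h1 : Tendsto (fun n : ℕ => cq x n / (4 * Real.log n)) atTop (𝓝 0) := by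
    have := (hc_div_L x).div_const 4
    simp only [zero_div] at this
    refine this.congr fun n => ?_
    rw [div_div]
    ring_nf
  simpa using tendsto_const_nhds.add h1

lemma hsu (x : ℝ) : Tendsto (fun n : ℕ => sq' n / uq x n) atTop (𝓝 1) := by
  have h1 := h_one_plus x
  have h2 : Tendsto (fun n : ℕ => (1 + cq x n / (4 * Real.log n))⁻¹) atTop (𝓝 1) := by
    simpa using h1.inv₀ one_ne_zero
  refine h2.congr' ?_
  filter_upwards [hL_top.eventually_gt_atTop 0, h1.eventually_ne one_ne_zero] with n hL hne
  have hs : 0 < sq' n := Real.sqrt_pos.mpr (by positivity)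
  rw [hu_eq hL, div_mul_cancel_left₀ hs.ne']

lemma hu_top (x : ℝ) : Tendsto (fun n : ℕ => uq x n) atTop atTop := by
  apply tendsto_atTop_mono' _ _ (hs_top.atTop_div_const (by norm_num : (0:ℝ) < 2))
  filter_upwards [hL_top.eventually_gt_atTop 0,
    (h_one_plus x).eventually (eventually_ge_nhds (by norm_num : (1:ℝ)/2 < 1))] with n h1 h2
  have hs : 0 < sq' n := Real.sqrt_pos.mpr (by positivity)
  rw [hu_eq h1]
  calc sq' n / 2 = sq' n * (1/2) := by ring
    _ ≤ sq' n * (1 + cq x n / (4 * Real.log n)) := by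
        apply mul_le_mul_of_nonneg_left h2 hs.le

lemma hcc (x : ℝ) : Tendsto (fun n : ℕ => Real.exp (-(cq x n)^2 / (16 * Real.log n))) atTop (𝓝 1) := by
  have h1 : Tendsto (fun n : ℕ => -(cq x n)^2 / (16 * Real.log n)) atTop (𝓝 0) := by
    have h2 := ((hc_div_sqrtL x).mul (hc_div_sqrtL x)).div_const 16
    simp only [mul_zero, zero_div] at h2
    have h2' : Tendsto (fun n : ℕ => -((cq x n / Real.sqrt (Real.log n)) * (cq x n / Real.sqrt (Real.log n)) / 16)) atTop (𝓝 0) := by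
      simpa using h2.neg
    refine h2'.congr' ?_
    filter_upwards [hL_top.eventually_gt_atTop 0] with n hL
    have : Real.sqrt (Real.log n) * Real.sqrt (Real.log n) = Real.log n :=
      Real.mul_self_sqrt hL.le
    rw [div_mul_div_comm, this]
    ring
  simpa [Function.comp_def] using (Real.continuous_exp.tendsto 0).comp h1

lemma tendsto_A (x : ℝ) :
    Tendsto (fun n : ℕ => 2 * (n:ℝ) * stdNormalPDF (uq x n) / uq x n) atTop
      (𝓝 (Real.exp (-x))) := by
  have h := (((hsu x).const_mul (Real.exp (-x))).mul (hcc x))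
  simp only [mul_one] at h
  refine (h.congr' ?_)
  filter_upwards [hL_top.eventually_gt_atTop 0, eventually_ge_atTop 1] with n hL hn
  exact (key_eq x hn hL).symm

lemma tendsto_one_plus_uinv (x : ℝ) :
    Tendsto (fun n : ℕ => 1 + ((uq x n)⁻¹) ^ 2) atTop (𝓝 1) := by
  have h1 : Tendsto (fun n : ℕ => (uq x n)⁻¹) atTop (𝓝 0) :=
    (hu_top x).inv_tendsto_atTop
  have h2 := h1.mul h1
  rw [mul_zero] at h2
  have h3 := h2.const_add (1:ℝ)
  simp only [add_zero] at h3
  refine (h3.congr fun n => ?_)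
  ring

lemma tendsto_n_tail (x : ℝ) :
    Tendsto (fun n : ℕ => (n:ℝ) * (2 * T (uq x n))) atTop (𝓝 (Real.exp (-x))) := by
  have hA := tendsto_A x
  have hlow : Tendsto (fun n : ℕ =>
      (2 * (n:ℝ) * stdNormalPDF (uq x n) / uq x n) / (1 + ((uq x n)⁻¹) ^ 2)) atTop
      (𝓝 (Real.exp (-x))) := by
    have := hA.div (tendsto_one_plus_uinv x) one_ne_zero
    simpa [Pi.div_def] using this
  refine tendsto_of_tendsto_of_tendsto_of_le_of_le' hlow hA ?_ ?_
  · filter_upwards [(hu_top x).eventually_gt_atTop 0] with n hu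
    have hpos1 : (0:ℝ) < 1 + ((uq x n)⁻¹) ^ 2 := by positivity
    rw [div_le_iff₀ hpos1]
    have hle := le_T hu
    have h2 := mul_le_mul_of_nonneg_left hle (show (0:ℝ) ≤ 2 * n by positivity)
    calc 2 * (n:ℝ) * stdNormalPDF (uq x n) / uq x n
        = 2 * (n:ℝ) * (stdNormalPDF (uq x n) / uq x n) := by ring
      _ ≤ 2 * (n:ℝ) * ((1 + ((uq x n)⁻¹) ^ 2) * T (uq x n)) := h2
      _ = (n:ℝ) * (2 * T (uq x n)) * (1 + ((uq x n)⁻¹) ^ 2) := by ring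
  · filter_upwards [(hu_top x).eventually_gt_atTop 0] with n hu
    have h2 := mul_le_mul_of_nonneg_left (T_le hu) (show (0:ℝ) ≤ 2 * n by positivity)
    calc (n:ℝ) * (2 * T (uq x n)) = 2 * (n:ℝ) * T (uq x n) := by ring
      _ ≤ 2 * (n:ℝ) * (stdNormalPDF (uq x n) / uq x n) := h2
      _ = 2 * (n:ℝ) * stdNormalPDF (uq x n) / uq x n := by ring

lemma pow_lim {ε : ℕ → ℝ} {c : ℝ} (hpos : ∀ᶠ n in atTop, 0 < ε n)
    (h : Tendsto (fun n : ℕ => (n:ℝ) * ε n) atTop (𝓝 c)) :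
    Tendsto (fun n : ℕ => (1 - ε n) ^ n) atTop (𝓝 (Real.exp (-c))) := by
  have hε0 : Tendsto ε atTop (𝓝 0) := by
    have h2 := h.mul (tendsto_inv_atTop_zero.comp tendsto_natCast_atTop_atTop)
    rw [mul_zero] at h2
    refine h2.congr' ?_
    filter_upwards [eventually_ge_atTop 1] with n hn
    have hne : (n:ℝ) ≠ 0 := by
      have : (1:ℝ) ≤ (n:ℝ) := by exact_mod_cast hn
      linarith
    show (n:ℝ) * ε n * ((n:ℝ))⁻¹ = ε n
    field_simp
  have hslope : Tendsto (fun t : ℝ => Real.log (1 - t) / t) (𝓝[≠] 0) (𝓝 (-1)) := by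
    have hd : HasDerivAt (fun t : ℝ => Real.log (1 - t)) (-1) 0 := by
      have h1 : HasDerivAt (fun t : ℝ => 1 - t) (-1) 0 := by
        simpa using ((hasDerivAt_id (0:ℝ)).const_sub 1)
      have h2 := h1.log (by norm_num)
      simpa using h2
    have h3 := hasDerivAt_iff_tendsto_slope.mp hd
    refine h3.congr fun t => ?_
    simp [slope_def_field]
  have hεne : Tendsto ε atTop (𝓝[≠] 0) := by
    rw [tendsto_nhdsWithin_iff]
    exact ⟨hε0, hpos.mono fun n hn => by simpa using hn.ne'⟩
  have hmain : Tendsto (fun n : ℕ => (n:ℝ) * Real.log (1 - ε n)) atTop (𝓝 (-c)) := by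
    have h3 := h.mul (hslope.comp hεne)
    rw [show c * (-1) = -c by ring] at h3
    refine h3.congr' ?_
    filter_upwards [hpos] with n hn
    show (n:ℝ) * ε n * (Real.log (1 - ε n) / ε n) = (n:ℝ) * Real.log (1 - ε n)
    field_simp
  have hcomp := (Real.continuous_exp.tendsto _).comp hmain
  refine hcomp.congr' ?_
  filter_upwards [hpos, hε0.eventually (eventually_lt_nhds one_pos)] with n hn h1
  show Real.exp ((n:ℝ) * Real.log (1 - ε n)) = (1 - ε n) ^ n
  rw [Real.exp_nat_mul, Real.exp_log (by linarith)]

/-- With u_n = a_n + b_n x, [2Φ(u_n) - 1]^n → exp(-e^{-x}). -/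
theorem gumbel_cdf_power_limit (x : ℝ) :
    Tendsto (fun n : ℕ => (2 * stdNormalCDF (aseq n + bseq n * x) - 1) ^ n) atTop
      (𝓝 (Real.exp (-Real.exp (-x)))) := by
  have hpos : ∀ᶠ n in atTop, 0 < 2 * T (uq x n) := by
    filter_upwards [(hu_top x).eventually_gt_atTop 0] with n hu
    have hle := le_T hu
    have hp : 0 < stdNormalPDF (uq x n) / uq x n := div_pos (pdf_pos _) hu
    nlinarith [sq_nonneg ((uq x n)⁻¹), hle]
  have hlim := pow_lim hpos (tendsto_n_tail x)
  refine hlim.congr fun n => ?_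
  have hc := cdf_add_T (uq x n)
  have : 2 * stdNormalCDF (aseq n + bseq n * x) - 1 = 1 - 2 * T (uq x n) := by
    unfold uq at hc ⊢
    linarith
  rw [this]

end Aux
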